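/- Let S, T be bounded self-adjoint positive semidefinite operators on a Hilbert space and λ > 0. If ‖(λI + T)^{-1/2}(T − S)‖ ≤ B for some B > 0, then ‖(λI + T)(λI + S)^{-1}‖ ≤ (B/√λ + 1)². -/

import Mathlib

open scoped NNReal

set_option synthInstance.maxHeartbeats 1000000
set_option maxHeartbeats 2000000

section Aux
variable {H : Type*} [NormedAddCommGroup H] [InnerProductSpace ℂ H] [CompleteSpace H]

local notation "A" => H →L[ℂ] H

lemma aux_algebraMap_eq (r : ℝ≥0) : algebraMap ℝ≥0 A r = ((r:ℝ):ℂ) • 1 := by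
  have h0 : algebraMap ℝ≥0 ℂ r = ((r:ℝ):ℂ) := by
    rw [IsScalarTower.algebraMap_apply ℝ≥0 ℝ ℂ]; norm_num
  rw [Algebra.algebraMap_eq_smul_one, ← algebraMap_smul ℂ r (1 : A), h0]

lemma aux_smul_one_nonneg (r : ℝ) (hr : 0 ≤ r) : (0:A) ≤ (r:ℂ) • 1 := by
  have : ((r:ℂ) • (1:A)) = star ((Real.sqrt r : ℂ) • (1:A)) * ((Real.sqrt r : ℂ) • (1:A)) := by
    simp [smul_smul, ← Complex.ofReal_mul, Real.mul_self_sqrt hr]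
  rw [this]
  exact star_mul_self_nonneg _

lemma aux_algebraMap_nonneg (r : ℝ≥0) : (0:A) ≤ algebraMap ℝ≥0 A r := by
  rw [aux_algebraMap_eq]
  exact aux_smul_one_nonneg _ r.2

lemma aux_algebraMap_isUnit {r : ℝ≥0} (hr : r ≠ 0) : IsUnit (algebraMap ℝ≥0 A r) := by
  have h1 : algebraMap ℝ≥0 A r = algebraMap ℂ A ((r:ℝ):ℂ) := by
    rw [aux_algebraMap_eq, Algebra.algebraMap_eq_smul_one]
  rw [h1]
  exact (isUnit_iff_ne_zero.mpr (by exact_mod_cast hr)).map (algebraMap ℂ A)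

lemma aux_isUnit {P : A} (hP : 0 ≤ P) {l : ℝ≥0} (hl : l ≠ 0) :
    IsUnit (algebraMap ℝ≥0 A l + P) :=
  CStarAlgebra.isUnit_of_le _ (le_add_of_nonneg_right hP)
    ((aux_algebraMap_isUnit hl).isStrictlyPositive (aux_algebraMap_nonneg l))

lemma aux_spectrum_le {P : A} (hP : 0 ≤ P) (l : ℝ≥0) {x : ℝ≥0}
    (hx : x ∈ spectrum ℝ≥0 (algebraMap ℝ≥0 A l + P)) : l ≤ x := by
  by_contra hlt
  push_neg at hlt
  apply spectrum.notMem_iff.mpr ?_ hx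
  have hxl : x ≤ l := hlt.le
  have hsub : algebraMap ℝ≥0 A x - (algebraMap ℝ≥0 A l + P)
      = -(algebraMap ℝ≥0 A (l - x) + P) := by
    have : algebraMap ℝ≥0 A l = algebraMap ℝ≥0 A (l - x) + algebraMap ℝ≥0 A x := by
      rw [← map_add, tsub_add_cancel_of_le hxl]
    rw [this]; abel
  rw [hsub]
  exact (aux_isUnit hP (tsub_pos_of_lt hlt).ne').neg

lemma aux_rpow_nnnorm_le {P : A} (hP : 0 ≤ P) {l : ℝ≥0} (hl : 0 < l) {y : ℝ} (hy : y ≤ 0) :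
    ‖CFC.rpow (algebraMap ℝ≥0 A l + P) y‖₊ ≤ l ^ y := by
  apply nnnorm_cfc_nnreal_le
  intro x hx
  exact NNReal.rpow_le_rpow_of_nonpos hl (aux_spectrum_le hP l hx) hy

end Aux

theorem stmt_12 {H : Type*} [NormedAddCommGroup H] [InnerProductSpace ℂ H] [CompleteSpace H]
    (S T : H →L[ℂ] H) (hS : 0 ≤ S) (hT : 0 ≤ T) (lam : ℝ) (hlam : 0 < lam)
    (B : ℝ) (hB : 0 < B)
    (h : ‖CFC.rpow ((lam : ℂ) • (1 : H →L[ℂ] H) + T) (-(1 / 2)) * (T - S)‖ ≤ B) :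
    ‖((lam : ℂ) • (1 : H →L[ℂ] H) + T) *
        CFC.rpow ((lam : ℂ) • (1 : H →L[ℂ] H) + S) (-1)‖ ≤
      (B / Real.sqrt lam + 1) ^ 2 := by
  set l : ℝ≥0 := ⟨lam, hlam.le⟩ with hl
  have hl0 : 0 < l := by exact_mod_cast hlam
  have halg : ((lam : ℂ) • (1 : H →L[ℂ] H)) = algebraMap ℝ≥0 (H →L[ℂ] H) l :=
    (aux_algebraMap_eq l).symm
  rw [halg] at h ⊢
  set A' : H →L[ℂ] H := algebraMap ℝ≥0 (H →L[ℂ] H) l + S with hA'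
  set B' : H →L[ℂ] H := algebraMap ℝ≥0 (H →L[ℂ] H) l + T with hB'
  have hA'nn : 0 ≤ A' := add_nonneg (aux_algebraMap_nonneg l) hS
  have hB'nn : 0 ≤ B' := add_nonneg (aux_algebraMap_nonneg l) hT
  have hA'spec : 0 ∉ spectrum ℝ≥0 A' := spectrum.zero_notMem ℝ≥0 (aux_isUnit hS hl0.ne')
  have hB'spec : 0 ∉ spectrum ℝ≥0 B' := spectrum.zero_notMem ℝ≥0 (aux_isUnit hT hl0.ne')
  set D : H →L[ℂ] H := T - S with hD
  set Ainv := CFC.rpow A' (-1 : ℝ) with hAinv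
  set Binv := CFC.rpow B' (-1 : ℝ) with hBinv
  set Bh := CFC.rpow B' (-(1/2) : ℝ) with hBh
  have hAinv1 : A' * Ainv = 1 := by
    have := CFC.rpow_mul_rpow_neg (a := A') 1 ((aux_isUnit hS hl0.ne').isStrictlyPositive hA'nn)
    rw [CFC.rpow_one A' hA'nn] at this
    exact this
  have hBinv1 : Binv * B' = 1 := by
    have := CFC.rpow_neg_mul_rpow (a := B') 1 ((aux_isUnit hT hl0.ne').isStrictlyPositive hB'nn)
    rw [CFC.rpow_one B' hB'nn] at this
    exact this
  have hBh2 : Bh * Bh = Binv := by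
    show B' ^ (-(1/2) : ℝ) * B' ^ (-(1/2) : ℝ) = B' ^ (-1 : ℝ)
    rw [← CFC.rpow_add (a := B') (aux_isUnit hT hl0.ne')]
    norm_num
  have hDB : D + A' = B' := by rw [hD, hA', hB']; abel
  have key : B' * Ainv = D * Binv * D * Ainv + D * Binv + 1 := by
    have h1 : B' = D * Binv * D + D * Binv * A' + A' := by
      have e : D * Binv * D + D * Binv * A' + A' = D * (Binv * (D + A')) + A' := by
        noncomm_ring
      rw [e, hDB, hBinv1, mul_one, hDB]
    calc B' * Ainv = (D * Binv * D + D * Binv * A' + A') * Ainv := by rw [← h1]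
      _ = D * Binv * D * Ainv + D * Binv * (A' * Ainv) + A' * Ainv := by noncomm_ring
      _ = D * Binv * D * Ainv + D * Binv + 1 := by rw [hAinv1, mul_one]
  have hDsa : IsSelfAdjoint D := hT.isSelfAdjoint.sub hS.isSelfAdjoint
  have hBhsa : IsSelfAdjoint Bh := (CFC.rpow_nonneg (a := B') (y := (-(1/2) : ℝ))).isSelfAdjoint
  have hstar : star (Bh * D) = D * Bh := by rw [star_mul, hDsa.star_eq, hBhsa.star_eq]
  have hsq : Real.sqrt lam * Real.sqrt lam = lam := Real.mul_self_sqrt hlam.le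
  have hsqpos : 0 < Real.sqrt lam := Real.sqrt_pos.mpr hlam
  have hM : ‖Bh * D‖ ≤ B := h
  have hDBinvD : ‖D * Binv * D‖ ≤ B ^ 2 := by
    have e1 : D * Binv * D = star (Bh * D) * (Bh * D) := by
      rw [hstar, ← hBh2]; noncomm_ring
    rw [e1, CStarRing.norm_star_mul_self, ← pow_two]
    exact pow_le_pow_left₀ (norm_nonneg _) hM 2
  have hAinvnorm : ‖Ainv‖ ≤ lam⁻¹ := by
    have h1 := aux_rpow_nnnorm_le hS hl0 (y := (-1 : ℝ)) (by norm_num)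
    have h2 := NNReal.coe_le_coe.mpr h1
    rw [coe_nnnorm, NNReal.coe_rpow, Real.rpow_neg_one] at h2
    exact h2
  have hBhnorm : ‖Bh‖ ≤ (Real.sqrt lam)⁻¹ := by
    have h1 := aux_rpow_nnnorm_le hT hl0 (y := (-(1/2) : ℝ)) (by norm_num)
    have h2 := NNReal.coe_le_coe.mpr h1
    rw [coe_nnnorm, NNReal.coe_rpow, Real.rpow_neg (by positivity), ← Real.sqrt_eq_rpow] at h2
    exact h2
  have hDBinv : ‖D * Binv‖ ≤ (Real.sqrt lam)⁻¹ * B := by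
    have e2 : D * Binv = star (Bh * (Bh * D)) := by
      rw [star_mul, hstar, hBhsa.star_eq, ← hBh2]; noncomm_ring
    rw [e2, norm_star]
    calc ‖Bh * (Bh * D)‖ ≤ ‖Bh‖ * ‖Bh * D‖ := norm_mul_le _ _
      _ ≤ (Real.sqrt lam)⁻¹ * B :=
          mul_le_mul hBhnorm hM (norm_nonneg _) (inv_nonneg.mpr hsqpos.le)
  have hexp : (B / Real.sqrt lam + 1) ^ 2 = B ^ 2 / lam + 2 * (B / Real.sqrt lam) + 1 := by
    rw [add_sq, div_pow, Real.sq_sqrt hlam.le, one_pow, mul_one]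
  calc ‖B' * Ainv‖ ≤ ‖D * Binv * D * Ainv‖ + ‖D * Binv‖ + ‖(1 : H →L[ℂ] H)‖ := by
        rw [key]
        exact norm_add₃_le
    _ ≤ ‖D * Binv * D‖ * ‖Ainv‖ + ((Real.sqrt lam)⁻¹ * B) + 1 := by
        have g1 : ‖D * Binv * D * Ainv‖ ≤ ‖D * Binv * D‖ * ‖Ainv‖ := norm_mul_le _ _
        have g3 : ‖(1 : H →L[ℂ] H)‖ ≤ 1 := ContinuousLinearMap.norm_id_le
        linarith [hDBinv]
    _ ≤ B ^ 2 * lam⁻¹ + ((Real.sqrt lam)⁻¹ * B) + 1 := by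
        have g2 : ‖D * Binv * D‖ * ‖Ainv‖ ≤ B ^ 2 * lam⁻¹ :=
          mul_le_mul hDBinvD hAinvnorm (norm_nonneg _) (by positivity)
        linarith
    _ ≤ (B / Real.sqrt lam + 1) ^ 2 := by
        rw [hexp]
        have h3 : B ^ 2 * lam⁻¹ = B ^ 2 / lam := by ring
        have h4 : (Real.sqrt lam)⁻¹ * B = B / Real.sqrt lam := by ring
        have h5 : 0 < B / Real.sqrt lam := div_pos hB hsqpos
        rw [h3, h4]
        linarith
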